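/- arXiv:2508.03023 — 2 statements merged into one kernel-verified Lean document; each statement's English description precedes it below -/
import Mathlib

section
/- Let μ ∈ ℂ with Re μ > −1/2, let t ∈ ℝ, let ε ∈ [−1/2, 1/2], and assume μ − ε + it ≠ 0. Then |Γ((μ+1+ε+it)/2) / Γ((μ−ε+it)/2)| ≤ ((Re μ + 3/2)/(Re μ + 1/2))² · |(μ+1+ε+it)/2|^(1/2+ε). -/
open Complex Filter Real Set Finset Topology

/-- The auxiliary function `v ↦ log(v² + y²) - 2 log v`, convex on `(0, ∞)`. -/
private noncomputable def auxF (y v : ℝ) : ℝ := Real.log (v ^ 2 + y ^ 2) - 2 * Real.log v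

private lemma auxF_hasDerivAt {y v : ℝ} (hv : 0 < v) :
    HasDerivAt (auxF y) (2 * v / (v ^ 2 + y ^ 2) - 2 / v) v := by
  have hpos : 0 < v ^ 2 + y ^ 2 := by positivity
  have h1 : HasDerivAt (fun v : ℝ => v ^ 2 + y ^ 2) (2 * v) v := by
    simpa using (hasDerivAt_pow 2 v).add_const (y ^ 2)
  have h2 : HasDerivAt (fun v : ℝ => Real.log (v ^ 2 + y ^ 2)) (2 * v / (v ^ 2 + y ^ 2)) v :=
    h1.log hpos.ne'
  have h3 : HasDerivAt (fun v : ℝ => 2 * Real.log v) (2 / v) v := by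
    simpa [div_eq_mul_inv, mul_comm] using (Real.hasDerivAt_log hv.ne').const_mul 2
  exact h2.sub h3

private lemma auxG_hasDerivAt {y v : ℝ} (hv : 0 < v) :
    HasDerivAt (fun v : ℝ => 2 * v / (v ^ 2 + y ^ 2) - 2 / v)
      ((2 * y ^ 2 - 2 * v ^ 2) / (v ^ 2 + y ^ 2) ^ 2 + 2 / v ^ 2) v := by
  have hpos : 0 < v ^ 2 + y ^ 2 := by positivity
  have h1 : HasDerivAt (fun v : ℝ => v ^ 2 + y ^ 2) (2 * v) v := by
    simpa using (hasDerivAt_pow 2 v).add_const (y ^ 2)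
  have h2 : HasDerivAt (fun v : ℝ => 2 * v) 2 v := by
    simpa using (hasDerivAt_id v).const_mul 2
  have h4 : HasDerivAt (fun v : ℝ => 2 * v / (v ^ 2 + y ^ 2))
      ((2 * (v ^ 2 + y ^ 2) - 2 * v * (2 * v)) / (v ^ 2 + y ^ 2) ^ 2) v := h2.div h1 hpos.ne'
  have h5 : HasDerivAt (fun v : ℝ => 2 / v) (2 * -(v ^ 2)⁻¹) v := by
    simpa [div_eq_mul_inv] using (hasDerivAt_inv hv.ne').const_mul 2
  have := h4.sub h5
  refine this.congr_deriv ?_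
  ring

private lemma auxF_convex (y : ℝ) : ConvexOn ℝ (Set.Ioi (0 : ℝ)) (auxF y) := by
  have hint : interior (Set.Ioi (0 : ℝ)) = Set.Ioi 0 := interior_Ioi
  have heq : Set.EqOn (deriv (auxF y)) (fun v : ℝ => 2 * v / (v ^ 2 + y ^ 2) - 2 / v)
      (Set.Ioi 0) := fun v hv => (auxF_hasDerivAt (y := y) hv).deriv
  refine convexOn_of_deriv2_nonneg (convex_Ioi 0) ?_ ?_ ?_ ?_
  · exact fun v hv => (auxF_hasDerivAt (y := y) hv).continuousAt.continuousWithinAt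
  · rw [hint]
    exact fun v hv => (auxF_hasDerivAt (y := y) hv).differentiableAt.differentiableWithinAt
  · rw [hint]
    refine DifferentiableOn.congr (f := fun v : ℝ => 2 * v / (v ^ 2 + y ^ 2) - 2 / v) ?_ heq
    exact fun v hv => (auxG_hasDerivAt (y := y) hv).differentiableAt.differentiableWithinAt
  · rw [hint]
    intro v hv
    have hv0 : (0 : ℝ) < v := hv
    have e1 : deriv^[2] (auxF y) v = deriv (deriv (auxF y)) v := by
      rw [Function.iterate_succ_apply', Function.iterate_one]
    have e2 : deriv (deriv (auxF y)) v
        = deriv (fun v : ℝ => 2 * v / (v ^ 2 + y ^ 2) - 2 / v) v := by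
      apply Filter.EventuallyEq.deriv_eq
      exact Filter.eventually_of_mem (isOpen_Ioi.mem_nhds hv) heq
    have e3 : deriv (fun v : ℝ => 2 * v / (v ^ 2 + y ^ 2) - 2 / v) v
        = (2 * y ^ 2 - 2 * v ^ 2) / (v ^ 2 + y ^ 2) ^ 2 + 2 / v ^ 2 :=
      (auxG_hasDerivAt hv0).deriv
    rw [e1, e2, e3]
    have hpos : (0 : ℝ) < v ^ 2 + y ^ 2 := by positivity
    rw [div_add_div _ _ (by positivity) (by positivity : (v:ℝ) ^ 2 ≠ 0)]
    apply div_nonneg _ (by positivity)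
    nlinarith [sq_nonneg v, sq_nonneg y, sq_nonneg (v * y)]

private lemma exp_auxF {y v : ℝ} (hv : 0 < v) :
    Real.exp (auxF y v) = (v ^ 2 + y ^ 2) / v ^ 2 := by
  have h2 : (2 : ℝ) * Real.log v = Real.log (v ^ 2) := by
    rw [Real.log_pow]; push_cast; ring
  rw [auxF, h2, Real.exp_sub, Real.exp_log (by positivity), Real.exp_log (by positivity)]

private lemma abs_eq_re_mul_exp {w : ℂ} (hw : 0 < w.re) :
    ‖w‖ = w.re * Real.exp (auxF w.im w.re / 2) := by
  have hsq : (w.re * Real.exp (auxF w.im w.re / 2)) ^ 2 = w.re * w.re + w.im * w.im := by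
    have : Real.exp (auxF w.im w.re / 2) ^ 2 = Real.exp (auxF w.im w.re) := by
      rw [← Real.exp_nat_mul]; ring_nf
    rw [mul_pow, this, exp_auxF hw]
    field_simp
  rw [Complex.norm_def, Complex.normSq_apply, ← hsq, Real.sqrt_sq (by positivity)]

private lemma gammaSeqR_pos {x : ℝ} (hx : 0 < x) {n : ℕ} (hn : 1 ≤ n) :
    0 < Real.GammaSeq x n := by
  have hn0 : (0 : ℝ) < n := by exact_mod_cast hn
  rw [Real.GammaSeq]
  apply div_pos
  · exact mul_pos (Real.rpow_pos_of_pos hn0 x) (by exact_mod_cast n.factorial_pos)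
  · exact Finset.prod_pos fun j _ => by positivity

private lemma abs_gammaSeq {w : ℂ} (hw : 0 < w.re) {n : ℕ} (hn : 1 ≤ n) :
    ‖Complex.GammaSeq w n‖
      = Real.GammaSeq w.re n *
        Real.exp (-(∑ j ∈ Finset.range (n + 1), auxF w.im (w.re + j)) / 2) := by
  have hn0 : (0 : ℝ) < n := by exact_mod_cast hn
  have habs : ∀ j ∈ Finset.range (n + 1),
      ‖w + (j : ℕ)‖ = (w.re + j) * Real.exp (auxF w.im (w.re + j) / 2) := by
    intro j _
    have h1 : (w + (j : ℕ)).re = w.re + j := by simp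
    have h2 : (w + (j : ℕ)).im = w.im := by simp
    have h3 : 0 < (w + (j : ℕ)).re := by rw [h1]; positivity
    rw [abs_eq_re_mul_exp h3, h1, h2]
  have hcpow : ‖(n : ℂ) ^ w‖ = (n : ℝ) ^ w.re := by
    rw [show ((n : ℂ)) = (((n : ℝ) : ℂ)) by norm_cast]
    exact Complex.norm_cpow_eq_rpow_re_of_pos hn0 w
  have hP : (0:ℝ) < ∏ j ∈ Finset.range (n + 1), (w.re + j) :=
    Finset.prod_pos fun j _ => by positivity
  rw [Complex.GammaSeq, Real.GammaSeq, norm_div, norm_mul, hcpow, norm_prod,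
    Finset.prod_congr rfl habs, Finset.prod_mul_distrib, ← Real.exp_sum,
    Complex.norm_natCast, ← Finset.sum_div, neg_div, Real.exp_neg, ← div_div,
    div_eq_mul_inv _ (Real.exp _)]

private lemma seq_ineq {z : ℂ} (hz : 0 < z.re) {s : ℝ} (hs0 : 0 ≤ s) (hs1 : s ≤ 1)
    {n : ℕ} (hn : 1 ≤ n) :
    Real.GammaSeq (z.re + s) n / Real.GammaSeq z.re n
        * Real.exp (s * (auxF z.im z.re - auxF z.im (z.re + n + 1)) / 2)
      ≤ ‖Complex.GammaSeq (z + (s : ℂ)) n / Complex.GammaSeq z n‖ := by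
  set x := z.re with hx
  set y := z.im with hy
  have hre : (z + (s : ℂ)).re = x + s := by simp [hx]
  have him : (z + (s : ℂ)).im = y := by simp [hy]
  have hzs : 0 < (z + (s : ℂ)).re := by rw [hre]; positivity
  rw [norm_div, abs_gammaSeq hzs hn, abs_gammaSeq hz hn, hre, him]
  have hR0 : 0 < Real.GammaSeq x n := gammaSeqR_pos hz hn
  have hR1 : 0 < Real.GammaSeq (x + s) n := gammaSeqR_pos (by positivity) hn
  rw [← div_mul_div_comm, ← Real.exp_sub]
  apply mul_le_mul_of_nonneg_left _ (le_of_lt (div_pos hR1 hR0))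
  rw [Real.exp_le_exp]
  have htel : ∑ j ∈ Finset.range (n + 1), (auxF y (x + j) - auxF y (x + j + 1))
      = auxF y x - auxF y (x + n + 1) := by
    have := Finset.sum_range_sub' (fun i : ℕ => auxF y (x + i)) (n + 1)
    simp only [Nat.cast_zero, add_zero, Nat.cast_add, Nat.cast_one] at this
    rw [show x + (n:ℝ) + 1 = x + ((n:ℝ) + 1) by ring, ← this]
    apply Finset.sum_congr rfl
    intro j _
    ring_nf
  have hsum : s * (auxF y x - auxF y (x + n + 1))
      ≤ ∑ j ∈ Finset.range (n + 1), (auxF y (x + j) - auxF y (x + s + j)) := by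
    rw [← htel, Finset.mul_sum]
    apply Finset.sum_le_sum
    intro j _
    have hu : (0 : ℝ) < x + j := by positivity
    have hmem1 : (x + j : ℝ) ∈ Set.Ioi (0 : ℝ) := hu
    have hmem2 : (x + j + 1 : ℝ) ∈ Set.Ioi (0 : ℝ) := by
      simp only [Set.mem_Ioi]; linarith
    have hconv := (auxF_convex y).2 hmem1 hmem2 (by linarith : (0:ℝ) ≤ 1 - s) hs0 (by ring)
    simp only [smul_eq_mul] at hconv
    have harg : (1 - s) * (x + j) + s * (x + j + 1) = x + s + j := by ring
    rw [harg] at hconv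
    linarith
  have hS : (-∑ j ∈ Finset.range (n + 1), auxF y (x + s + j)) / 2
        - (-∑ j ∈ Finset.range (n + 1), auxF y (x + j)) / 2
      = (∑ j ∈ Finset.range (n + 1), (auxF y (x + j) - auxF y (x + s + j))) / 2 := by
    rw [Finset.sum_sub_distrib]
    ring
  rw [hS]
  linarith

private lemma wendel {x : ℝ} (hx : 0 < x) {s : ℝ} (hs0 : 0 ≤ s) (hs1 : s ≤ 1) :
    x * Real.Gamma x ≤ Real.Gamma (x + s) * (x + s) ^ (1 - s) := by
  have h1 : (0:ℝ) < x + s := by linarith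
  have hmem1 : (x + s) ∈ Set.Ioi (0:ℝ) := h1
  have hmem2 : (x + s + 1) ∈ Set.Ioi (0:ℝ) := by simp only [Set.mem_Ioi]; linarith
  have hc := Real.convexOn_log_Gamma.2 hmem1 hmem2 hs0 (show (0:ℝ) ≤ 1 - s by linarith) (show s + (1 - s) = 1 by ring)
  simp only [smul_eq_mul, Function.comp_apply] at hc
  rw [show s * (x + s) + (1 - s) * (x + s + 1) = x + 1 by ring] at hc
  have hgpos1 : 0 < Real.Gamma (x + s) := Real.Gamma_pos_of_pos h1
  have hgpos2 : 0 < Real.Gamma (x + s + 1) := Real.Gamma_pos_of_pos (by linarith)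
  have hgpos3 : 0 < Real.Gamma (x + 1) := Real.Gamma_pos_of_pos (by linarith)
  have hexp := Real.exp_le_exp.2 hc
  rw [Real.exp_log hgpos3, Real.exp_add, mul_comm s, mul_comm (1 - s),
    ← Real.rpow_def_of_pos hgpos1, ← Real.rpow_def_of_pos hgpos2] at hexp
  rw [Real.Gamma_add_one hx.ne', Real.Gamma_add_one h1.ne'] at hexp
  rw [Real.mul_rpow h1.le hgpos1.le] at hexp
  calc x * Real.Gamma x ≤ Real.Gamma (x + s) ^ s * ((x + s) ^ (1 - s) * Real.Gamma (x + s) ^ (1 - s)) := hexp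
    _ = Real.Gamma (x + s) ^ (s + (1 - s)) * (x + s) ^ (1 - s) := by
        rw [Real.rpow_add hgpos1]; ring
    _ = Real.Gamma (x + s) * (x + s) ^ (1 - s) := by norm_num

private lemma key {z : ℂ} (hz : 0 < z.re) {s : ℝ} (hs0 : 0 ≤ s) (hs1 : s ≤ 1) :
    ‖z‖ ^ s * (z.re / (z.re + s)) ^ (1 - s)
      ≤ ‖Complex.Gamma (z + (s : ℂ)) / Complex.Gamma z‖ := by
  set x := z.re with hxdef
  set y := z.im with hydef
  have hxs : 0 < x + s := by linarith
  have hΓz : Complex.Gamma z ≠ 0 := Complex.Gamma_ne_zero_of_re_pos hz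
  have hQ : Tendsto (fun n => ‖Complex.GammaSeq (z + (s:ℂ)) n / Complex.GammaSeq z n‖)
      atTop (𝓝 (‖Complex.Gamma (z + (s:ℂ)) / Complex.Gamma z‖)) :=
    (continuous_norm.tendsto _).comp
      ((Complex.GammaSeq_tendsto_Gamma (z + (s:ℂ))).div (Complex.GammaSeq_tendsto_Gamma z) hΓz)
  have hF0 : Tendsto (fun v : ℝ => auxF y v) atTop (𝓝 0) := by
    have t1 : Tendsto (fun v : ℝ => 1 + y ^ 2 / v ^ 2) atTop (𝓝 1) := by
      have : Tendsto (fun v : ℝ => y ^ 2 / v ^ 2) atTop (𝓝 0) :=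
        Tendsto.div_atTop tendsto_const_nhds (tendsto_pow_atTop (by norm_num : (2:ℕ) ≠ 0))
      simpa using tendsto_const_nhds.add this
    have t2 : Tendsto (fun v : ℝ => Real.log (1 + y ^ 2 / v ^ 2)) atTop (𝓝 0) := by
      have := (Real.continuousAt_log (by norm_num : (1:ℝ) ≠ 0)).tendsto.comp t1
      simpa [Function.comp_def] using this
    apply t2.congr'
    filter_upwards [eventually_gt_atTop (0:ℝ)] with v hv
    rw [auxF, show (2:ℝ) * Real.log v = Real.log (v ^ 2) by rw [Real.log_pow]; push_cast; ring,
      ← Real.log_div (by positivity) (by positivity)]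
    congr 1
    field_simp
  have hFn : Tendsto (fun n : ℕ => auxF y (x + n + 1)) atTop (𝓝 0) := by
    apply hF0.comp
    apply tendsto_atTop_add_const_right
    exact tendsto_atTop_add_const_left _ _ tendsto_natCast_atTop_atTop
  have hR : Tendsto (fun n : ℕ => Real.GammaSeq (x + s) n / Real.GammaSeq x n
        * Real.exp (s * (auxF y x - auxF y (x + n + 1)) / 2)) atTop
      (𝓝 (Real.Gamma (x + s) / Real.Gamma x * Real.exp (s * auxF y x / 2))) := by
    apply Tendsto.mul
    · exact (Real.GammaSeq_tendsto_Gamma (x + s)).div (Real.GammaSeq_tendsto_Gamma x)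
        (Real.Gamma_pos_of_pos hz).ne'
    · have h1 : Tendsto (fun n : ℕ => s * (auxF y x - auxF y (x + n + 1)) / 2) atTop
          (𝓝 (s * (auxF y x - 0) / 2)) :=
        ((tendsto_const_nhds.sub hFn).const_mul s).div_const 2
      simpa [Function.comp_def] using (Real.continuous_exp.tendsto _).comp h1
  have hle : Real.Gamma (x + s) / Real.Gamma x * Real.exp (s * auxF y x / 2)
      ≤ ‖Complex.Gamma (z + (s:ℂ)) / Complex.Gamma z‖ := by
    refine le_of_tendsto_of_tendsto hR hQ ?_
    filter_upwards [eventually_ge_atTop 1] with n hn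
    exact seq_ineq hz hs0 hs1 hn
  refine le_trans ?_ hle
  have habs : ‖z‖ = x * Real.exp (auxF y x / 2) := abs_eq_re_mul_exp hz
  have hE : Real.exp (s * auxF y x / 2) = Real.exp (auxF y x / 2) ^ s := by
    rw [← Real.exp_mul]; ring_nf
  have hlhs : ‖z‖ ^ s * (x / (x + s)) ^ (1 - s)
      = x / (x + s) ^ (1 - s) * Real.exp (auxF y x / 2) ^ s := by
    rw [habs, Real.mul_rpow hz.le (Real.exp_pos _).le, Real.div_rpow hz.le hxs.le]
    rw [show x ^ s * Real.exp (auxF y x / 2) ^ s * (x ^ (1 - s) / (x + s) ^ (1 - s))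
        = x ^ s * x ^ (1 - s) / (x + s) ^ (1 - s) * Real.exp (auxF y x / 2) ^ s by ring]
    rw [← Real.rpow_add hz]
    norm_num
  rw [hlhs, hE]
  apply mul_le_mul_of_nonneg_right _ (Real.rpow_nonneg (Real.exp_pos _).le s)
  rw [div_le_div_iff₀ (by positivity) (Real.Gamma_pos_of_pos hz)]
  have hw := wendel hz hs0 hs1
  exact hw

private lemma ratio_bound {x ε : ℝ} (hμ : -(1/2:ℝ) < x) (hε₁ : -(1/2:ℝ) ≤ ε) (hε₂ : ε ≤ 1/2) :
    ((x+1+ε)/2 + (1/2-ε))/((x+1+ε)/2) ≤ ((x+3/2)/(x+1/2))^2 := by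
  rw [div_pow, div_le_div_iff₀ (by linarith) (pow_pos (by linarith) 2)]
  nlinarith [mul_nonneg (by linarith : (0:ℝ) ≤ ε + 1/2) (sq_nonneg (x + 3/2)),
        mul_nonneg (by linarith : (0:ℝ) ≤ ε + 1/2) (sq_nonneg (x + 1/2))]

/-- If `Re μ > -1/2`, `t ∈ ℝ`, `ε ∈ [-1/2, 1/2]` and `μ - ε + it ≠ 0`, then
`|Γ((μ+1+ε+it)/2) / Γ((μ-ε+it)/2)| ≤ ((Re μ + 3/2)/(Re μ + 1/2))² · |(μ+1+ε+it)/2|^(1/2+ε)`. -/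
theorem gamma_quotient_bound_large_re
    (μ : ℂ) (hμ : -(1/2 : ℝ) < μ.re)
    (t ε : ℝ) (hε₁ : -(1/2 : ℝ) ≤ ε) (hε₂ : ε ≤ 1/2)
    (hne : μ - (ε : ℂ) + (t : ℂ) * I ≠ 0) :
    ‖Complex.Gamma ((μ + 1 + (ε : ℂ) + (t : ℂ) * I) / 2) /
        Complex.Gamma ((μ - (ε : ℂ) + (t : ℂ) * I) / 2)‖ ≤
      ((μ.re + 3/2) / (μ.re + 1/2)) ^ 2 *
        ‖(μ + 1 + (ε : ℂ) + (t : ℂ) * I) / 2‖ ^ (1/2 + ε) := by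
  set x := μ.re with hxdef
  set s : ℝ := 1/2 - ε with hsdef
  set a : ℂ := (μ - (ε : ℂ) + (t : ℂ) * I) / 2 with hadef
  set b : ℂ := (μ + 1 + (ε : ℂ) + (t : ℂ) * I) / 2 with hbdef
  have hs0 : 0 ≤ s := by rw [hsdef]; linarith
  have hs1 : s ≤ 1 := by rw [hsdef]; linarith
  have h2c : (2:ℂ) = ((2:ℝ):ℂ) := by norm_num
  have hare : a.re = (x - ε) / 2 := by
    rw [hadef, h2c, Complex.div_ofReal_re]
    simp [Complex.add_re, Complex.sub_re, Complex.mul_re, hxdef]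
  have hbre : b.re = (x + 1 + ε) / 2 := by
    rw [hbdef, h2c, Complex.div_ofReal_re]
    simp [Complex.add_re, Complex.mul_re, hxdef]
  have haim : a.im = (μ.im + t) / 2 := by
    rw [hadef, h2c, Complex.div_ofReal_im]
    simp [Complex.add_im, Complex.sub_im, Complex.mul_im]
  have hbim : b.im = (μ.im + t) / 2 := by
    rw [hbdef, h2c, Complex.div_ofReal_im]
    simp [Complex.add_im, Complex.mul_im]
  have hbpos : 0 < b.re := by rw [hbre]; linarith
  have hb0 : b ≠ 0 := fun h => by rw [h] at hbpos; simp at hbpos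
  have habsb : 0 < ‖b‖ := norm_pos_iff.mpr hb0
  have ha0 : a ≠ 0 := div_ne_zero hne two_ne_zero
  have hΓa : Complex.Gamma a ≠ 0 := by
    apply Complex.Gamma_ne_zero
    intro m
    cases m with
    | zero => simpa using ha0
    | succ k =>
      intro h
      have : a.re = -((k:ℝ) + 1) := by rw [h]; push_cast; simp
      rw [hare] at this
      have hk : (0:ℝ) ≤ (k:ℝ) := Nat.cast_nonneg k
      linarith
  have hΓb : Complex.Gamma b ≠ 0 := Complex.Gamma_ne_zero_of_re_pos hbpos
  have hab : a + 1 = b + (s : ℂ) := by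
    rw [hadef, hbdef, hsdef]
    push_cast
    ring
  have hΓrw : Complex.Gamma b / Complex.Gamma a
      = Complex.Gamma b * a / Complex.Gamma (b + (s : ℂ)) := by
    rw [← hab, Complex.Gamma_add_one a ha0]
    field_simp [hΓa]
  rw [hΓrw, norm_div, norm_mul]
  set K : ℝ := ‖b‖ ^ s * (b.re / (b.re + s)) ^ (1 - s) with hKdef
  have hKpos : 0 < K := by
    apply mul_pos (Real.rpow_pos_of_pos habsb s)
    exact Real.rpow_pos_of_pos (div_pos hbpos (by linarith)) _
  have hkey : ‖Complex.Gamma b‖ * K ≤ ‖Complex.Gamma (b + (s:ℂ))‖ := by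
    have h := key hbpos hs0 hs1
    rw [norm_div (Complex.Gamma (b + (s:ℂ))) (Complex.Gamma b)] at h
    rw [mul_comm]
    exact (le_div_iff₀ (norm_pos_iff.mpr hΓb)).1 h
  have habsΓb : 0 < ‖Complex.Gamma b‖ := norm_pos_iff.mpr hΓb
  have hstep1 : ‖Complex.Gamma b‖ * ‖a‖ /
        ‖Complex.Gamma (b + (s:ℂ))‖
      ≤ ‖Complex.Gamma b‖ * ‖a‖ /
        (‖Complex.Gamma b‖ * K) :=
    div_le_div_of_nonneg_left (by positivity) (mul_pos habsΓb hKpos) hkey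
  have hstep2 : ‖Complex.Gamma b‖ * ‖a‖ /
        (‖Complex.Gamma b‖ * K) = ‖a‖ / K := by
    rw [mul_div_mul_left _ _ habsΓb.ne']
  have habsle : ‖a‖ ≤ ‖b‖ := by
    rw [Complex.norm_def, Complex.norm_def]
    apply Real.sqrt_le_sqrt
    rw [Complex.normSq_apply, Complex.normSq_apply, hare, hbre, haim, hbim]
    nlinarith [mul_nonneg (by linarith : (0:ℝ) ≤ 1 + 2*x) (by linarith : (0:ℝ) ≤ 1 + 2*ε)]
  have hstep3 : ‖a‖ / K ≤ ‖b‖ / K := by gcongr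
  have hstep4 : ‖b‖ / K
      = ‖b‖ ^ (1/2 + ε) * ((b.re + s) / b.re) ^ (1 - s) := by
    have e1 : ‖b‖ ^ ((1:ℝ) - s) = ‖b‖ / ‖b‖ ^ s := by
      rw [Real.rpow_sub habsb, Real.rpow_one]
    have e2 : (((b.re / (b.re + s)) ^ ((1:ℝ) - s)))⁻¹ = ((b.re + s) / b.re) ^ ((1:ℝ) - s) := by
      rw [← Real.inv_rpow (by positivity), inv_div]
    rw [hKdef, show (1:ℝ)/2 + ε = 1 - s by rw [hsdef]; ring, e1, ← e2]
    rw [div_mul_eq_div_div, div_eq_mul_inv]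
  have hr1 : (1:ℝ) ≤ (b.re + s) / b.re := by
    rw [le_div_iff₀ hbpos]; linarith
  have hstep5 : ((b.re + s) / b.re) ^ (1 - s) ≤ ((x + 3/2) / (x + 1/2)) ^ 2 := by
    have h1 : ((b.re + s) / b.re) ^ (1 - s) ≤ ((b.re + s) / b.re) := by
      calc ((b.re + s) / b.re) ^ (1 - s) ≤ ((b.re + s) / b.re) ^ (1:ℝ) :=
            Real.rpow_le_rpow_of_exponent_le hr1 (by linarith)
        _ = (b.re + s) / b.re := Real.rpow_one _
    refine h1.trans ?_
    rw [hbre, hsdef]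
    exact ratio_bound hμ hε₁ hε₂
  calc ‖Complex.Gamma b‖ * ‖a‖ / ‖Complex.Gamma (b + (s:ℂ))‖
      ≤ ‖a‖ / K := hstep1.trans (le_of_eq hstep2)
    _ ≤ ‖b‖ / K := hstep3
    _ = ‖b‖ ^ (1/2 + ε) * ((b.re + s) / b.re) ^ (1 - s) := hstep4
    _ ≤ ‖b‖ ^ (1/2 + ε) * (((x + 3/2) / (x + 1/2)) ^ 2) :=
        mul_le_mul_of_nonneg_left hstep5 (Real.rpow_nonneg habsb.le _)
    _ = ((x + 3/2) / (x + 1/2)) ^ 2 * ‖b‖ ^ (1/2 + ε) := mul_comm _ _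
end

section
/- Let u ∈ ℝ, η ∈ ℝ, λ ∈ (0,1), f ∈ ℕ with f ≥ 1, and μ_1,…,μ_f ∈ ℂ, and set g(s) = e^((u + iπfη/4)(1/2 − s)) ∏_{j=1}^f Γ(λs + μ_j). Let ρ ∈ ℂ be a pole of g of order n with polar coefficients c_1,…,c_n, i.e. the function s ↦ g(s+ρ) − ∑_{j=1}^n c_j s^(−j) extends holomorphically to a neighbourhood of 0. Assume Re(λρ + μ_j) ≤ 0 and |1 − λρ − μ_j| > λ for all j = 1,…,f, and that e^(u/λ) / ∏_{j=1}^f (|1 − λρ − μ_j| − λ) < 1/2. Suppose (R_l)_{l≥1} are complex numbers such that for each l ≥ 1 there is r_l > 0 with g holomorphic on the punctured disc 0 < |s − (ρ − l/λ)| ≤ r_l and R_l = (1/(2πi)) ∮_{|s − (ρ − l/λ)| = r_l} g(s) ds (the circle traversed once counterclockwise), so that R_l is the residue of g at ρ − l/λ. Then the series ∑_{l=1}^∞ R_l converges absolutely and |∑_{l=1}^∞ R_l| < max_{1≤j≤n} |c_j|. -/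
open Complex Real

section helpers
open Finset Metric

private lemma gamma_shift (l : ℕ) (z : ℂ) (hz : ∀ k ∈ Finset.Icc 1 l, z - (k : ℂ) ≠ 0) :
    Complex.Gamma (z - (l : ℂ)) * ∏ k ∈ Finset.Icc 1 l, (z - (k : ℂ)) = Complex.Gamma z := by
  induction l with
  | zero => simp
  | succ l ih =>
      rw [Finset.prod_Icc_succ_top (Nat.le_add_left 1 l)]
      have h1 : z - ((l : ℂ) + 1) ≠ 0 := by
        have h := hz (l + 1) (by simp)
        push_cast at h
        exact h
      have h2 : Complex.Gamma (z - (l : ℂ)) = (z - ((l : ℂ) + 1)) * Complex.Gamma (z - ((l : ℂ) + 1)) := by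
        have := Complex.Gamma_add_one (z - ((l : ℂ) + 1)) h1
        rw [← this]
        congr 1
        ring
      have ih' := ih (fun k hk => hz k (Finset.Icc_subset_Icc_right (Nat.le_succ _) hk))
      rw [← ih', h2]
      push_cast
      ring

private lemma key_ineq (z : ℂ) (hz : z.re ≤ 0) (k : ℕ) (hk : 1 ≤ k) :
    ‖1 - z‖ ≤ ‖(k : ℂ) - z‖ := by
  have hk1 : (1 : ℝ) ≤ (k : ℝ) := by exact_mod_cast hk
  rw [Complex.norm_def, Complex.norm_def]
  apply Real.sqrt_le_sqrt
  simp only [Complex.normSq_apply, Complex.sub_re, Complex.sub_im, Complex.one_re, Complex.one_im,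
    Complex.natCast_re, Complex.natCast_im]
  nlinarith [sq_nonneg (z.im)]

private lemma major {ι : Type*} (lam : ℝ) (hlam : 0 < lam)
    (s : Finset ι) (β : ι → ℂ) (hβ : ∀ i ∈ s, lam < ‖β i‖) :
    ∃ a : ℕ → ℂ, Summable (fun m => ‖a m‖) ∧
      (∑' m, ‖a m‖) ≤ ∏ i ∈ s, (‖β i‖ - lam)⁻¹ ∧
      ∀ v : ℂ, ‖v‖ ≤ 1 →
        HasSum (fun m => a m * v ^ m) (∏ i ∈ s, ((lam : ℂ) * v - β i)⁻¹) := by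
  classical
  induction s using Finset.cons_induction with
  | empty =>
      refine ⟨fun m => if m = 0 then 1 else 0, ?_, ?_, ?_⟩
      · apply summable_of_ne_finset_zero (s := {0})
        intro m hm
        simp only [Finset.mem_singleton] at hm
        simp [hm]
      · rw [tsum_eq_single 0 (by intro m hm; simp [hm])]
        simp
      · intro v hv
        have heq : (fun m => (if m = 0 then (1 : ℂ) else 0) * v ^ m)
            = fun m => if m = 0 then (1 : ℂ) else 0 := by
          funext m
          by_cases h : m = 0 <;> simp [h]
        rw [heq, Finset.prod_empty]
        exact hasSum_ite_eq 0 1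
  | cons i t hi ih =>
      have hβi : lam < ‖β i‖ := hβ i (Finset.mem_cons_self i t)
      obtain ⟨a, ha1, ha2, ha3⟩ := ih (fun j hj => hβ j (Finset.mem_cons_of_mem hj))
      set B := ‖β i‖ with hB
      have hB0 : 0 < B := lt_trans hlam hβi
      have hβ0 : β i ≠ 0 := by
        intro h
        rw [hB, h] at hB0
        simp at hB0
      set geo : ℕ → ℂ := fun m => -((lam : ℂ) ^ m / (β i) ^ (m + 1)) with hgeo
      have hgeon : ∀ m, ‖geo m‖ = B⁻¹ * (lam / B) ^ m := by
        intro m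
        have hnb : ‖geo m‖ = lam ^ m / B ^ (m + 1) := by
          rw [hgeo]
          rw [norm_neg, norm_div, norm_pow, norm_pow, Complex.norm_real, Real.norm_eq_abs,
            abs_of_pos hlam]
        rw [hnb]
        ring
      have hq1 : (0:ℝ) ≤ lam / B := by positivity
      have hq2 : lam / B < 1 := (div_lt_one hB0).mpr hβi
      have hgs : Summable (fun m => ‖geo m‖) := by
        refine Summable.congr (((summable_geometric_of_lt_one hq1 hq2).mul_left B⁻¹)) ?_
        intro m
        rw [hgeon]
      have hgt : (∑' m, ‖geo m‖) = (B - lam)⁻¹ := by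
        have : (∑' m, ‖geo m‖) = B⁻¹ * (1 - lam / B)⁻¹ := by
          rw [tsum_congr hgeon, tsum_mul_left, tsum_geometric_of_lt_one hq1 hq2]
        rw [this]
        field_simp
      have hgv : ∀ v : ℂ, ‖v‖ ≤ 1 → HasSum (fun m => geo m * v ^ m) (((lam : ℂ) * v - β i)⁻¹) := by
        intro v hv
        have hx : ‖(lam : ℂ) * v / β i‖ < 1 := by
          rw [norm_div, norm_mul, Complex.norm_real, Real.norm_eq_abs, abs_of_pos hlam,
            div_lt_one hB0]
          calc lam * ‖v‖ ≤ lam * 1 := by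
                exact mul_le_mul_of_nonneg_left hv hlam.le
            _ = lam := mul_one lam
            _ < B := hβi
        have h0 := (hasSum_geometric_of_norm_lt_one hx).mul_left (-(β i)⁻¹)
        have heq : (fun m => -(β i)⁻¹ * ((lam : ℂ) * v / β i) ^ m) = fun m => geo m * v ^ m := by
          funext m
          rw [hgeo]
          simp only
          ring
        rw [heq] at h0
        suffices hval : ((lam : ℂ) * v - β i)⁻¹ = -(β i)⁻¹ * (1 - (lam : ℂ) * v / β i)⁻¹ by
          rw [hval]; exact h0
        have hne : (lam : ℂ) * v - β i ≠ 0 := by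
          intro h
          have h2 : ‖(lam : ℂ) * v‖ = ‖β i‖ := by rw [sub_eq_zero] at h; rw [h]
          rw [norm_mul, Complex.norm_real, Real.norm_eq_abs, abs_of_pos hlam] at h2
          nlinarith [norm_nonneg v, mul_le_mul_of_nonneg_left hv hlam.le]
        have h3 : (1 - (lam : ℂ) * v / β i) = (β i - (lam : ℂ) * v) / β i := by
          field_simp
        rw [h3, inv_div, eq_comm, neg_mul, ← mul_div_assoc, inv_mul_cancel₀ hβ0, one_div,
          ← inv_neg, neg_sub]
      set b : ℕ → ℂ := fun m => ∑ p ∈ Finset.HasAntidiagonal.antidiagonal m, geo p.1 * a p.2 with hb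
      have hbs : Summable (fun m => ‖b m‖) :=
        summable_norm_sum_mul_antidiagonal_of_summable_norm hgs ha1
      have habs : ∀ (u : ℕ → ℂ), Summable (fun m => ‖u m‖) →
          Summable (fun m => ‖(fun k => ‖u k‖) m‖) := by
        intro u hu
        refine hu.congr ?_
        intro m
        rw [Real.norm_of_nonneg (norm_nonneg _)]
      have hmaj : Summable (fun m => ∑ p ∈ Finset.HasAntidiagonal.antidiagonal m, ‖geo p.1‖ * ‖a p.2‖) := by
        have h0 := summable_norm_sum_mul_antidiagonal_of_summable_norm (habs geo hgs) (habs a ha1)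
        refine h0.congr ?_
        intro m
        rw [Real.norm_of_nonneg]
        exact Finset.sum_nonneg fun p _ => mul_nonneg (norm_nonneg _) (norm_nonneg _)
      have hbb : (∑' m, ‖b m‖) ≤ ∏ j ∈ Finset.cons i t hi, (‖β j‖ - lam)⁻¹ := by
        rw [Finset.prod_cons]
        have h1 : (∑' m, ‖b m‖) ≤ ∑' m, ∑ p ∈ Finset.HasAntidiagonal.antidiagonal m, ‖geo p.1‖ * ‖a p.2‖ := by
          refine Summable.tsum_le_tsum (fun m => ?_) hbs hmaj
          refine (norm_sum_le _ _).trans ?_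
          apply le_of_eq
          exact Finset.sum_congr rfl fun p _ => norm_mul _ _
        have h2 : (∑' m, ∑ p ∈ Finset.HasAntidiagonal.antidiagonal m, ‖geo p.1‖ * ‖a p.2‖)
            = (∑' m, ‖geo m‖) * (∑' m, ‖a m‖) :=
          (tsum_mul_tsum_eq_tsum_sum_antidiagonal_of_summable_norm (habs geo hgs) (habs a ha1)).symm
        refine h1.trans ?_
        rw [h2, hgt]
        exact mul_le_mul_of_nonneg_left ha2 (inv_nonneg.mpr (by linarith))
      refine ⟨b, hbs, hbb, ?_⟩
      intro v hv
      have hgv' := hgv v hv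
      have hav := ha3 v hv
      have hsum1 : Summable (fun m => ‖geo m * v ^ m‖) := by
        refine Summable.of_nonneg_of_le (fun _ => norm_nonneg _) (fun m => ?_) hgs
        rw [norm_mul, norm_pow]
        calc ‖geo m‖ * ‖v‖ ^ m ≤ ‖geo m‖ * 1 :=
              mul_le_mul_of_nonneg_left (pow_le_one₀ (norm_nonneg v) hv) (norm_nonneg _)
          _ = ‖geo m‖ := mul_one _
      have hsum2 : Summable (fun m => ‖a m * v ^ m‖) := by
        refine Summable.of_nonneg_of_le (fun _ => norm_nonneg _) (fun m => ?_) ha1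
        rw [norm_mul, norm_pow]
        calc ‖a m‖ * ‖v‖ ^ m ≤ ‖a m‖ * 1 :=
              mul_le_mul_of_nonneg_left (pow_le_one₀ (norm_nonneg v) hv) (norm_nonneg _)
          _ = ‖a m‖ := mul_one _
      have key := tsum_mul_tsum_eq_tsum_sum_antidiagonal_of_summable_norm hsum1 hsum2
      rw [hgv'.tsum_eq, hav.tsum_eq] at key
      have hterm : ∀ m, (∑ p ∈ Finset.HasAntidiagonal.antidiagonal m, (geo p.1 * v ^ p.1) * (a p.2 * v ^ p.2))
          = b m * v ^ m := by
        intro m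
        rw [hb]
        simp only
        rw [Finset.sum_mul]
        refine Finset.sum_congr rfl fun p hp => ?_
        have := Finset.HasAntidiagonal.mem_antidiagonal.mp hp
        rw [← this, pow_add]
        ring
      have hbsum : Summable (fun m => b m * v ^ m) := by
        refine Summable.of_norm (Summable.of_nonneg_of_le (fun _ => norm_nonneg _) (fun m => ?_) hbs)
        rw [norm_mul, norm_pow]
        calc ‖b m‖ * ‖v‖ ^ m ≤ ‖b m‖ * 1 :=
              mul_le_mul_of_nonneg_left (pow_le_one₀ (norm_nonneg v) hv) (norm_nonneg _)
          _ = ‖b m‖ := mul_one _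
      rw [Finset.prod_cons]
      rw [Summable.hasSum_iff hbsum]
      rw [← tsum_congr hterm, ← key]

private lemma circleIntegral_split {ι : Type*} (s : Finset ι) (F : ι → ℂ → ℂ) (G : ℂ → ℂ)
    (c : ℂ) (Rr : ℝ) (hF : ∀ i ∈ s, CircleIntegrable (F i) c Rr) (hG : CircleIntegrable G c Rr) :
    (∮ z in C(c, Rr), ((∑ i ∈ s, F i z) + G z))
      = (∑ i ∈ s, ∮ z in C(c, Rr), F i z) + ∮ z in C(c, Rr), G z := by
  simp only [circleIntegral]
  have h1 : (fun θ : ℝ => deriv (circleMap c Rr) θ •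
        ((∑ i ∈ s, F i (circleMap c Rr θ)) + G (circleMap c Rr θ)))
      = fun θ => (∑ i ∈ s, deriv (circleMap c Rr) θ • F i (circleMap c Rr θ))
          + deriv (circleMap c Rr) θ • G (circleMap c Rr θ) := by
    funext θ
    rw [smul_add, Finset.smul_sum]
  have hsumInt : IntervalIntegrable
      (fun θ => ∑ i ∈ s, deriv (circleMap c Rr) θ • F i (circleMap c Rr θ))
      MeasureTheory.volume 0 (2 * Real.pi) := by
    have h2 := IntervalIntegrable.sum s (fun i hi => (hF i hi).out)
    have h3 : (∑ i ∈ s, fun θ => deriv (circleMap c Rr) θ • F i (circleMap c Rr θ))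
        = (fun θ => ∑ i ∈ s, deriv (circleMap c Rr) θ • F i (circleMap c Rr θ)) := by
      funext θ
      simp [Finset.sum_apply]
    rwa [h3] at h2
  rw [h1, intervalIntegral.integral_add hsumInt hG.out]
  congr 1
  exact intervalIntegral.integral_finset_sum (fun i hi => (hF i hi).out)

end helpers

set_option maxHeartbeats 1000000 in
open Finset Metric in
/-- Lemma 7 (tails of residues): if `ρ` is a pole of
`g(s) = e^{(u+iπfη/4)(1/2-s)} ∏_{j=1}^f Γ(λs+μ_j)` of order `n` with polar
coefficients `c_1,…,c_n`, and the stated smallness conditions hold, then the sum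
of the residues `R_l` of `g` at `ρ - l/λ`, `l ≥ 1`, converges absolutely and is
bounded in modulus by `max_j |c_j|`. -/
theorem residue_tail_bound
    (u η : ℝ) (lam : ℝ) (hlam₁ : 0 < lam) (hlam₂ : lam < 1)
    (f : ℕ) (hf : 1 ≤ f) (μ : Fin f → ℂ)
    (g : ℂ → ℂ)
    (hg : ∀ s, g s = Complex.exp (((u : ℂ) + I * (π : ℂ) * f * η / 4) * (1/2 - s)) *
      ∏ j, Complex.Gamma ((lam : ℂ) * s + μ j))
    (ρ : ℂ) (n : ℕ) (hn : 1 ≤ n)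
    (c : ℕ → ℂ) (hcn : c n ≠ 0)
    (hpolar : ∃ h : ℂ → ℂ, AnalyticAt ℂ h 0 ∧
      ∀ᶠ s in nhdsWithin (0 : ℂ) {0}ᶜ,
        g (s + ρ) = (∑ j ∈ Finset.Icc 1 n, c j * s ^ (-(j : ℤ))) + h s)
    (hρre : ∀ j, ((lam : ℂ) * ρ + μ j).re ≤ 0)
    (hρabs : ∀ j, lam < ‖1 - (lam : ℂ) * ρ - μ j‖)
    (hsmall : Real.exp (u / lam) / (∏ j, (‖1 - (lam : ℂ) * ρ - μ j‖ - lam)) < 1/2)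
    (R : ℕ → ℂ) (rr : ℕ → ℝ)
    (hR : ∀ l : ℕ, 1 ≤ l → 0 < rr l ∧
      (∀ s : ℂ, s ≠ ρ - (l : ℂ) / (lam : ℂ) →
        ‖s - (ρ - (l : ℂ) / (lam : ℂ))‖ ≤ rr l → DifferentiableAt ℂ g s) ∧
      R l = (2 * (π : ℂ) * I)⁻¹ * ∮ s in C(ρ - (l : ℂ) / (lam : ℂ), rr l), g s) :
    (Summable fun l : ℕ => ‖R (l + 1)‖) ∧
      ‖∑' l : ℕ, R (l + 1)‖ <
        (Finset.Icc 1 n).sup' (Finset.nonempty_Icc.mpr hn) fun j => ‖c j‖ := by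
  classical
  obtain ⟨h, hA, hev⟩ := hpolar
  set A : ℂ := (u : ℂ) + I * (π : ℂ) * f * η / 4 with hAdef
  set q : ℝ := Real.exp (u / lam) / ∏ j, (‖1 - (lam : ℂ) * ρ - μ j‖ - lam) with hqdef
  have hbpos : ∀ j, 0 < ‖1 - (lam : ℂ) * ρ - μ j‖ - lam :=
    fun j => sub_pos.mpr (hρabs j)
  have hprodpos : 0 < ∏ j, (‖1 - (lam : ℂ) * ρ - μ j‖ - lam) :=
    Finset.prod_pos fun j _ => hbpos j
  have hq0 : 0 < q := div_pos (Real.exp_pos _) hprodpos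
  have hq2 : q < 1 / 2 := hsmall
  have hq1 : q < 1 := by linarith
  set cmax : ℝ := (Finset.Icc 1 n).sup' (Finset.nonempty_Icc.mpr hn) (fun j => ‖c j‖)
    with hcm
  have hcle : ∀ j ∈ Finset.Icc 1 n, ‖c j‖ ≤ cmax := fun j hj => by
    rw [hcm]
    exact Finset.le_sup' (fun k => ‖c k‖) hj
  have hcmax0 : 0 < cmax :=
    lt_of_lt_of_le (norm_pos_iff.mpr hcn)
      (hcle n (Finset.mem_Icc.mpr ⟨hn, le_refl n⟩))
  rw [eventually_nhdsWithin_iff, Metric.eventually_nhds_iff] at hev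
  obtain ⟨δ0, hδ0, hev⟩ := hev
  obtain ⟨δ1, hδ1, hh1⟩ := Metric.eventually_nhds_iff.mp hA.eventually_analyticAt
  set r : ℝ := min (min δ0 δ1 / 2) (2⁻¹ : ℝ) with hrdef
  have hδm : 0 < min δ0 δ1 := lt_min hδ0 hδ1
  have hr0 : 0 < r := lt_min (by positivity) (by norm_num)
  have hrhalf : r ≤ (2⁻¹ : ℝ) := min_le_right _ _
  have hr1 : r ≤ 1 := le_trans hrhalf (by norm_num)
  have hrδ0 : r < δ0 := by
    have h1 := min_le_left (min δ0 δ1 / 2) (2⁻¹ : ℝ)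
    have h2 := min_le_left δ0 δ1
    rw [hrdef]
    linarith
  have hrδ1 : r < δ1 := by
    have h1 := min_le_left (min δ0 δ1 / 2) (2⁻¹ : ℝ)
    have h2 := min_le_right δ0 δ1
    rw [hrdef]
    linarith
  have hlamne : (lam : ℂ) ≠ 0 := Complex.ofReal_ne_zero.mpr hlam₁.ne'
  -- local form of the polar expansion
  have hgeq : ∀ w : ℂ, w ≠ ρ → dist w ρ < δ0 →
      g w = (∑ j ∈ Finset.Icc 1 n, c j * (w - ρ) ^ (-(j : ℤ))) + h (w - ρ) := by
    intro w hw hwd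
    have h1 : dist (w - ρ) 0 < δ0 := by
      rwa [dist_zero_right, ← dist_eq_norm]
    have h2 : (w - ρ) ∈ ({0}ᶜ : Set ℂ) := by
      simp [sub_eq_zero, hw]
    have := hev h1 h2
    rw [sub_add_cancel] at this
    exact this
  -- differentiability of g on a punctured neighbourhood of ρ
  have hgdiff : ∀ w : ℂ, w ≠ ρ → dist w ρ < min δ0 δ1 → DifferentiableAt ℂ g w := by
    intro w hw hwd
    have hopen : IsOpen {y : ℂ | y ≠ ρ ∧ dist y ρ < min δ0 δ1} := by
      apply IsOpen.inter
      · exact isOpen_ne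
      · exact isOpen_lt (continuous_id.dist continuous_const) continuous_const
    have hevq : g =ᶠ[nhds w]
        fun y => (∑ j ∈ Finset.Icc 1 n, c j * (y - ρ) ^ (-(j : ℤ))) + h (y - ρ) := by
      filter_upwards [hopen.mem_nhds ⟨hw, hwd⟩] with y hy
      exact hgeq y hy.1 (lt_of_lt_of_le hy.2 (min_le_left _ _))
    rw [hevq.differentiableAt_iff]
    apply DifferentiableAt.add
    · apply DifferentiableAt.fun_sum
      intro j hj
      apply DifferentiableAt.const_mul
      have hne : w - ρ ≠ 0 := sub_ne_zero.mpr hw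
      exact (differentiableAt_zpow.mpr (Or.inl hne)).comp w (differentiableAt_id.sub_const ρ)
    · have hna : AnalyticAt ℂ h (w - ρ) := by
        apply hh1
        rw [dist_zero_right, ← dist_eq_norm]
        exact lt_of_lt_of_le hwd (min_le_right _ _)
      exact hna.differentiableAt.comp w (differentiableAt_id.sub_const ρ)
  -- key estimate for each residue
  have hRb : ∀ l : ℕ, 1 ≤ l → ‖R l‖ ≤ cmax * q ^ l := by
    intro l hl
    obtain ⟨hrrl, hgdl, hRl⟩ := hR l hl
    set cl : ℂ := ρ - (l : ℂ) / (lam : ℂ) with hcl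
    set sl : Finset (Fin f × ℕ) := Finset.univ ×ˢ Finset.Icc 1 l with hsl
    set β : Fin f × ℕ → ℂ := fun i => (i.2 : ℂ) - (lam : ℂ) * ρ - μ i.1 with hβd
    have hβb : ∀ i ∈ sl, ‖1 - (lam : ℂ) * ρ - μ i.1‖ ≤ ‖β i‖ := by
      intro i hi
      have hk : 1 ≤ i.2 := by
        rw [hsl, Finset.mem_product, Finset.mem_Icc] at hi
        exact hi.2.1
      have hki := key_ineq ((lam : ℂ) * ρ + μ i.1) (hρre i.1) i.2 hk
      have e1 : 1 - ((lam : ℂ) * ρ + μ i.1) = 1 - (lam : ℂ) * ρ - μ i.1 := by ring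
      have e2 : (i.2 : ℂ) - ((lam : ℂ) * ρ + μ i.1) = β i := by simp only [hβd]; ring
      rw [e1, e2] at hki
      exact hki
    have hβ : ∀ i ∈ sl, lam < ‖β i‖ := by
      intro i hi
      exact lt_of_lt_of_le (hρabs i.1) (hβb i hi)
    obtain ⟨a, ha1, ha2, ha3⟩ := major lam hlam₁ sl β hβ
    set ε : ℂ := Complex.exp (A * l / lam) with hεd
    set Φ : ℂ → ℂ := fun w => ε * ∏ i ∈ sl, ((lam : ℂ) * (w - ρ) - β i)⁻¹ with hΦd
    have hdenlb : ∀ w : ℂ, dist w ρ ≤ 1 → ∀ i ∈ sl,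
        ‖1 - (lam : ℂ) * ρ - μ i.1‖ - lam
          ≤ ‖(lam : ℂ) * (w - ρ) - β i‖ := by
      intro w hw i hi
      have h1 : ‖(lam : ℂ) * (w - ρ)‖ ≤ lam := by
        rw [norm_mul, Complex.norm_real, Real.norm_eq_abs, abs_of_pos hlam₁]
        calc lam * ‖w - ρ‖ ≤ lam * 1 := by
              apply mul_le_mul_of_nonneg_left _ hlam₁.le
              rw [← Complex.dist_eq]
              exact hw
          _ = lam := mul_one lam
      have h2 : ‖β i‖ - ‖(lam : ℂ) * (w - ρ)‖
          ≤ ‖(lam : ℂ) * (w - ρ) - β i‖ := by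
        have h4 := norm_sub_norm_le (β i) ((lam : ℂ) * (w - ρ))
        rw [norm_sub_rev (β i)] at h4
        simpa using h4
      have h3 := hβb i hi
      linarith
    have hden0 : ∀ w : ℂ, dist w ρ ≤ 1 → ∀ i ∈ sl, (lam : ℂ) * (w - ρ) - β i ≠ 0 := by
      intro w hw i hi hz
      have h1 := hdenlb w hw i hi
      rw [hz, norm_zero] at h1
      have h2 := hbpos i.1
      linarith
    have hΦdiff : ∀ w : ℂ, dist w ρ ≤ 1 → DifferentiableAt ℂ Φ w := by
      intro w hw
      simp only [hΦd]
      apply DifferentiableAt.const_mul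
      apply DifferentiableAt.fun_finsetProd
      intro i hi
      exact DifferentiableAt.inv
        (((differentiableAt_id.sub_const ρ).const_mul _).sub_const (β i)) (hden0 w hw i hi)
    have hfactor : ∀ (w : ℂ) (i : Fin f × ℕ), (lam : ℂ) * (w - ρ) - β i
        = (lam : ℂ) * w + μ i.1 - (i.2 : ℂ) := by
      intro w i
      rw [hβd]
      ring
    have hgid : ∀ w : ℂ, dist w ρ ≤ 1 → g (w - (l : ℂ) / (lam : ℂ)) = g w * Φ w := by
      intro w hw
      have hznz : ∀ (j : Fin f), ∀ k ∈ Finset.Icc 1 l, (lam : ℂ) * w + μ j - (k : ℂ) ≠ 0 := by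
        intro j k hk
        rw [← hfactor w (j, k)]
        exact hden0 w hw (j, k)
          (by rw [hsl, Finset.mem_product]; exact ⟨Finset.mem_univ _, hk⟩)
      have hprodne : ∀ j : Fin f, (∏ k ∈ Finset.Icc 1 l, ((lam : ℂ) * w + μ j - (k : ℂ))) ≠ 0 := by
        intro j
        rw [Finset.prod_ne_zero_iff]
        exact fun k hk => hznz j k hk
      have hΓ : ∀ j : Fin f, Complex.Gamma ((lam : ℂ) * w + μ j - (l : ℂ))
          = Complex.Gamma ((lam : ℂ) * w + μ j)
            * (∏ k ∈ Finset.Icc 1 l, ((lam : ℂ) * w + μ j - (k : ℂ)))⁻¹ := by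
        intro j
        have hgs := gamma_shift l ((lam : ℂ) * w + μ j) (fun k hk => hznz j k hk)
        rw [← hgs, mul_assoc, mul_inv_cancel₀ (hprodne j), mul_one]
      have harg : ∀ j : Fin f, (lam : ℂ) * (w - (l : ℂ) / (lam : ℂ)) + μ j
          = (lam : ℂ) * w + μ j - (l : ℂ) := by
        intro j
        field_simp
        ring
      have hexp : Complex.exp (A * (1 / 2 - (w - (l : ℂ) / (lam : ℂ))))
          = Complex.exp (A * (1 / 2 - w)) * ε := by
        rw [hεd, ← Complex.exp_add]
        congr 1
        field_simp
        ring
      rw [hg (w - (l : ℂ) / (lam : ℂ)), hg w]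
      calc Complex.exp (A * (1 / 2 - (w - (l : ℂ) / (lam : ℂ))))
            * ∏ j, Complex.Gamma ((lam : ℂ) * (w - (l : ℂ) / (lam : ℂ)) + μ j)
          = (Complex.exp (A * (1 / 2 - w)) * ε)
            * ∏ j, (Complex.Gamma ((lam : ℂ) * w + μ j)
              * (∏ k ∈ Finset.Icc 1 l, ((lam : ℂ) * w + μ j - (k : ℂ)))⁻¹) := by
            rw [hexp]
            congr 1
            refine Finset.prod_congr rfl fun j _ => ?_
            rw [harg j, hΓ j]
        _ = (Complex.exp (A * (1 / 2 - w)) * ∏ j, Complex.Gamma ((lam : ℂ) * w + μ j)) * Φ w := by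
            rw [Finset.prod_mul_distrib]
            simp only [hΦd]
            have hpp : ∏ i ∈ sl, ((lam : ℂ) * (w - ρ) - β i)⁻¹
                = ∏ j, (∏ k ∈ Finset.Icc 1 l, ((lam : ℂ) * w + μ j - (k : ℂ)))⁻¹ := by
              rw [hsl, Finset.prod_product]
              refine Finset.prod_congr rfl fun j _ => ?_
              rw [← Finset.prod_inv_distrib]
              exact Finset.prod_congr rfl fun k _ => by rw [hfactor w (j, k)]
            rw [hpp]
            ring
    have hdist_shift : ∀ x : ℂ, dist (x + (l : ℂ) / (lam : ℂ)) ρ = dist x cl := by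
      intro x
      rw [hcl, dist_eq_norm, dist_eq_norm]
      congr 1
      ring
    have hgid' : ∀ x : ℂ, dist x cl ≤ 1 →
        g x = g (x + (l : ℂ) / (lam : ℂ)) * Φ (x + (l : ℂ) / (lam : ℂ)) := by
      intro x hx
      have h1 : dist (x + (l : ℂ) / (lam : ℂ)) ρ ≤ 1 := by
        rw [hdist_shift]
        exact hx
      have h2 := hgid (x + (l : ℂ) / (lam : ℂ)) h1
      rw [add_sub_cancel_right] at h2
      exact h2
    have hgdcl : ∀ x : ℂ, x ≠ cl → dist x cl ≤ r → DifferentiableAt ℂ g x := by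
      intro x hx hxr
      have hx1 : dist x cl < 1 := lt_of_le_of_lt hxr (by
        have := hrhalf
        linarith)
      have hopen : IsOpen {y : ℂ | y ≠ cl ∧ dist y cl < 1} :=
        IsOpen.inter isOpen_ne (isOpen_lt (continuous_id.dist continuous_const) continuous_const)
      have hevq : g =ᶠ[nhds x]
          fun y => g (y + (l : ℂ) / (lam : ℂ)) * Φ (y + (l : ℂ) / (lam : ℂ)) := by
        filter_upwards [hopen.mem_nhds ⟨hx, hx1⟩] with y hy
        exact hgid' y hy.2.le
      rw [hevq.differentiableAt_iff]
      have hwρ : dist (x + (l : ℂ) / (lam : ℂ)) ρ ≤ r := by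
        rw [hdist_shift]
        exact hxr
      have hwne : x + (l : ℂ) / (lam : ℂ) ≠ ρ := by
        intro hcontra
        apply hx
        rw [hcl, ← hcontra]
        ring
      apply DifferentiableAt.mul
      · exact (hgdiff _ hwne (lt_of_le_of_lt hwρ (lt_min hrδ0 hrδ1))).comp x
          (differentiableAt_id.add_const _)
      · exact DifferentiableAt.comp (g := Φ) (f := fun y : ℂ => y + (l : ℂ) / (lam : ℂ)) x
          (hΦdiff _ (le_trans hwρ hr1)) (differentiableAt_id.add_const _)
    have hda : ∀ x ∈ closedBall cl (max r (rr l)) \ ball cl (min r (rr l)),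
        DifferentiableAt ℂ g x := by
      intro x hx
      obtain ⟨hx1, hx2⟩ := hx
      rw [mem_closedBall] at hx1
      rw [mem_ball, not_lt] at hx2
      have hxne : x ≠ cl := by
        intro hcontra
        rw [hcontra, dist_self] at hx2
        have := lt_min hr0 hrrl
        linarith
      rcases le_or_gt (dist x cl) (rr l) with hc | hc
      · exact hgdl x hxne (by rw [← Complex.dist_eq]; exact hc)
      · have hrle : dist x cl ≤ r := by
          rcases le_total r (rr l) with hm | hm
          · exfalso
            rw [max_eq_right hm] at hx1
            linarith
          · rwa [max_eq_left hm] at hx1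
        exact hgdcl x hxne hrle
    have hswitch : (∮ s in C(cl, rr l), g s) = ∮ s in C(cl, r), g s := by
      rcases le_total r (rr l) with hm | hm
      · refine circleIntegral_eq_of_differentiable_on_annulus_off_countable hr0 hm
          Set.countable_empty (fun x hx => ?_) (fun x hx => ?_)
        · refine (hda x ?_).continuousAt.continuousWithinAt
          rw [max_eq_right hm, min_eq_left hm]
          exact hx
        · refine hda x ?_
          rw [max_eq_right hm, min_eq_left hm]
          exact ⟨ball_subset_closedBall hx.1.1, fun hxx => hx.1.2 (ball_subset_closedBall hxx)⟩
      · refine (circleIntegral_eq_of_differentiable_on_annulus_off_countable hrrl hm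
          Set.countable_empty (fun x hx => ?_) (fun x hx => ?_)).symm
        · refine (hda x ?_).continuousAt.continuousWithinAt
          rw [max_eq_left hm, min_eq_right hm]
          exact hx
        · refine hda x ?_
          rw [max_eq_left hm, min_eq_right hm]
          exact ⟨ball_subset_closedBall hx.1.1, fun hxx => hx.1.2 (ball_subset_closedBall hxx)⟩
    have hcmshift : ∀ θ : ℝ, circleMap cl r θ = circleMap ρ r θ - (l : ℂ) / (lam : ℂ) := by
      intro θ
      rw [hcl]
      simp only [circleMap]
      ring
    have htrans : (∮ s in C(cl, r), g s) = ∮ w in C(ρ, r), g (w - (l : ℂ) / (lam : ℂ)) := by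
      simp only [circleIntegral, deriv_circleMap, hcmshift]
    have hsphere1 : ∀ w ∈ sphere ρ r, dist w ρ ≤ 1 := by
      intro w hw
      rw [mem_sphere] at hw
      rw [hw]
      exact hr1
    have hspherene : ∀ w ∈ sphere ρ r, w - ρ ≠ 0 := by
      intro w hw hz
      rw [mem_sphere] at hw
      rw [sub_eq_zero] at hz
      rw [hz, dist_self] at hw
      linarith
    have hΦcont : ∀ w : ℂ, dist w ρ ≤ 1 → ContinuousAt Φ w :=
      fun w hw => (hΦdiff w hw).continuousAt
    have hFint : ∀ j ∈ Finset.Icc 1 n, CircleIntegrable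
        (fun w => c j * ((w - ρ) ^ (-(j : ℤ)) * Φ w)) ρ r := by
      intro j _
      apply ContinuousOn.circleIntegrable hr0.le
      intro w hw
      refine ContinuousAt.continuousWithinAt ?_
      apply ContinuousAt.mul continuousAt_const
      apply ContinuousAt.mul
      · exact ContinuousAt.zpow₀ (continuousAt_id.sub continuousAt_const) _
          (Or.inl (hspherene w hw))
      · exact hΦcont w (hsphere1 w hw)
    have hhcont : ∀ w : ℂ, dist w ρ ≤ r → ContinuousAt (fun w => h (w - ρ)) w := by
      intro w hw
      have hna : AnalyticAt ℂ h (w - ρ) := by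
        apply hh1
        rw [dist_zero_right, ← dist_eq_norm]
        exact lt_of_le_of_lt hw hrδ1
      exact ContinuousAt.comp (f := fun y : ℂ => y - ρ) hna.continuousAt
        (continuousAt_id.sub continuousAt_const)
    have hGint : CircleIntegrable (fun w => h (w - ρ) * Φ w) ρ r := by
      apply ContinuousOn.circleIntegrable hr0.le
      intro w hw
      have hwr : dist w ρ ≤ r := le_of_eq (mem_sphere.mp hw)
      exact ((hhcont w hwr).mul (hΦcont w (hsphere1 w hw))).continuousWithinAt
    have hsing : Set.EqOn (fun w => g (w - (l : ℂ) / (lam : ℂ)))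
        (fun w => (∑ j ∈ Finset.Icc 1 n, c j * ((w - ρ) ^ (-(j : ℤ)) * Φ w))
          + h (w - ρ) * Φ w) (sphere ρ r) := by
      intro w hw
      simp only
      have hwd : dist w ρ = r := mem_sphere.mp hw
      have hwne : w ≠ ρ := by
        intro he
        rw [he, dist_self] at hwd
        linarith
      have hx : dist (w - (l : ℂ) / (lam : ℂ)) cl = r := by
        rw [← hdist_shift (w - (l : ℂ) / (lam : ℂ)), sub_add_cancel]
        exact hwd
      rw [hgid' (w - (l : ℂ) / (lam : ℂ)) (by rw [hx]; exact hr1), sub_add_cancel]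
      rw [hgeq w hwne (by rw [hwd]; exact hrδ0)]
      rw [add_mul, Finset.sum_mul]
      congr 1
      exact Finset.sum_congr rfl fun j _ => by ring
    have hsplit : (∮ w in C(ρ, r), g (w - (l : ℂ) / (lam : ℂ)))
        = (∑ j ∈ Finset.Icc 1 n, ∮ w in C(ρ, r), c j * ((w - ρ) ^ (-(j : ℤ)) * Φ w))
          + ∮ w in C(ρ, r), h (w - ρ) * Φ w := by
      rw [circleIntegral.integral_congr hr0.le hsing]
      exact circleIntegral_split (Finset.Icc 1 n) _ _ ρ r hFint hGint
    have hGzero : (∮ w in C(ρ, r), h (w - ρ) * Φ w) = 0 := by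
      refine circleIntegral_eq_zero_of_differentiable_on_off_countable hr0.le
        Set.countable_empty (fun w hw => ?_) (fun w hw => ?_)
      · rw [mem_closedBall] at hw
        refine ContinuousAt.continuousWithinAt ?_
        exact (hhcont w hw).mul (hΦcont w (le_trans hw hr1))
      · have hwb : dist w ρ < r := mem_ball.mp hw.1
        apply DifferentiableAt.mul
        · have hna : AnalyticAt ℂ h (w - ρ) := by
            apply hh1
            rw [dist_zero_right, ← dist_eq_norm]
            exact lt_trans hwb hrδ1
          exact hna.differentiableAt.comp w (differentiableAt_id.sub_const ρ)
        · exact hΦdiff w (le_trans hwb.le hr1)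
    have hΦsum : ∀ y : ℂ, ‖y‖ < 1 → HasSum (fun m => (ε * a m) * y ^ m) (Φ (ρ + y)) := by
      intro y hy
      have h1 := (ha3 y hy.le).mul_left ε
      have h2 : Φ (ρ + y) = ε * ∏ i ∈ sl, ((lam : ℂ) * y - β i)⁻¹ := by
        simp only [hΦd, add_sub_cancel_left]
      rw [h2]
      have h3 : (fun m => (ε * a m) * y ^ m) = fun m => ε * (a m * y ^ m) := by
        funext m
        ring
      rw [h3]
      exact h1
    set p : FormalMultilinearSeries ℂ ℂ ℂ :=
      fun m => ContinuousMultilinearMap.mkPiRing ℂ (Fin m) (ε * a m) with hpd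
    have hasum' : Summable fun m => ‖ε * a m‖ := by
      have h1 := ha1.mul_left ‖ε‖
      refine h1.congr fun m => ?_
      rw [norm_mul]
    have hpball : HasFPowerSeriesOnBall Φ p ρ 1 := by
      refine ⟨?_, one_pos, ?_⟩
      · have h1 : Summable fun m => ‖p m‖ * ((1 : NNReal) : ℝ) ^ m := by
          refine hasum'.congr fun m => ?_
          simp only [hpd, ContinuousMultilinearMap.norm_mkPiRing, NNReal.coe_one, one_pow, mul_one]
        have h2 := FormalMultilinearSeries.le_radius_of_summable p h1
        simpa using h2
      · intro y hy
        rw [mem_emetric_ball_zero_iff] at hy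
        have hy1 : ‖y‖ < 1 := by rwa [← ofReal_norm, ENNReal.ofReal_lt_one] at hy
        have hfun : (fun m => p m fun _ => y) = fun m => (ε * a m) * y ^ m := by
          funext m
          simp only [hpd, ContinuousMultilinearMap.mkPiRing_apply, Fin.prod_const, smul_eq_mul]
          ring
        rw [hfun]
        exact hΦsum y hy1
    have hΦdiffOn : DifferentiableOn ℂ Φ (closedBall ρ r) := fun w hw =>
      (hΦdiff w (le_trans (mem_closedBall.mp hw) hr1)).differentiableWithinAt
    have hrr : ((r.toNNReal : ℝ)) = r := Real.coe_toNNReal r hr0.le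
    have hΦdiffOn' : DifferentiableOn ℂ Φ (closedBall ρ ((r.toNNReal : ℝ))) := by
      rw [hrr]
      exact hΦdiffOn
    have hcpb := DifferentiableOn.hasFPowerSeriesOnBall hΦdiffOn'
      (Real.toNNReal_pos.mpr hr0)
    rw [hrr] at hcpb
    have hpeq : p = cauchyPowerSeries Φ ρ r :=
      HasFPowerSeriesAt.eq_formalMultilinearSeries ⟨1, hpball⟩ ⟨_, hcpb⟩
    have h2πne : (2 * (π : ℂ) * I) ≠ 0 := by
      simp [Real.pi_ne_zero, Complex.I_ne_zero, Complex.ofReal_ne_zero]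
    have hcoeff : ∀ m : ℕ, (∮ z in C(ρ, r), (z - ρ)⁻¹ ^ m * ((z - ρ)⁻¹ * Φ z))
        = (2 * (π : ℂ) * I) * (ε * a m) := by
      intro m
      have h1 := congrFun hpeq m
      have h2 := congrArg (fun (Q : ContinuousMultilinearMap ℂ (fun _ : Fin m => ℂ) ℂ)
        => Q (fun _ => 1)) h1
      simp only [hpd, cauchyPowerSeries, ContinuousMultilinearMap.mkPiRing_apply,
        Fin.prod_const, one_pow, one_smul, one_mul, smul_eq_mul] at h2
      rw [h2, ← mul_assoc, mul_inv_cancel₀ h2πne, one_mul]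
    have hjval : ∀ j ∈ Finset.Icc 1 n, (∮ w in C(ρ, r), c j * ((w - ρ) ^ (-(j : ℤ)) * Φ w))
        = c j * ((2 * (π : ℂ) * I) * (ε * a (j - 1))) := by
      intro j hj
      have hj1 : 1 ≤ j := (Finset.mem_Icc.mp hj).1
      rw [circleIntegral.integral_const_mul]
      congr 1
      have hfun : Set.EqOn (fun w => (w - ρ) ^ (-(j : ℤ)) * Φ w)
          (fun w => (w - ρ)⁻¹ ^ (j - 1) * ((w - ρ)⁻¹ * Φ w)) (sphere ρ r) := by
        intro w _
        simp only
        have hpow : ((w - ρ) ^ (-(j : ℤ))) = (w - ρ)⁻¹ ^ (j - 1) * (w - ρ)⁻¹ := by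
          rw [zpow_neg, zpow_natCast, ← inv_pow, ← pow_succ, Nat.sub_add_cancel hj1]
        rw [hpow]
        ring
      rw [circleIntegral.integral_congr hr0.le hfun, hcoeff (j - 1)]
    have hRval : R l = ∑ j ∈ Finset.Icc 1 n, c j * (ε * a (j - 1)) := by
      rw [hRl, hswitch, htrans, hsplit, hGzero, add_zero,
        Finset.sum_congr rfl hjval, Finset.mul_sum]
      refine Finset.sum_congr rfl fun j hj => ?_
      rw [show (2 * (π : ℂ) * I)⁻¹ * (c j * ((2 * (π : ℂ) * I) * (ε * a (j - 1))))
          = ((2 * (π : ℂ) * I)⁻¹ * (2 * (π : ℂ) * I)) * (c j * (ε * a (j - 1))) from by ring,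
        inv_mul_cancel₀ h2πne, one_mul]
    -- now the numerical bound
    have hεabs : ‖ε‖ = Real.exp (u / lam) ^ l := by
      rw [hεd, Complex.norm_exp]
      have hre : (A * l / lam).re = (l : ℝ) * (u / lam) := by
        rw [hAdef]
        have h1 : ((u : ℂ) + I * (π : ℂ) * f * η / 4) * l / lam
            = ((u : ℂ) + I * (π : ℂ) * f * η / 4) * (((l : ℝ) / lam : ℝ) : ℂ) := by
          push_cast
          ring
        rw [h1]
        simp [Complex.mul_re, Complex.add_re, Complex.add_im, Complex.mul_im, Complex.div_re,
          Complex.div_im, Complex.I_re, Complex.I_im, Complex.ofReal_re, Complex.ofReal_im]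
        field_simp
      rw [hre, Real.exp_nat_mul]
    have hprodle : (∏ i ∈ sl, (‖β i‖ - lam)⁻¹)
        ≤ ((∏ j, (‖1 - (lam : ℂ) * ρ - μ j‖ - lam))⁻¹) ^ l := by
      calc (∏ i ∈ sl, (‖β i‖ - lam)⁻¹)
          ≤ ∏ i ∈ sl, (‖1 - (lam : ℂ) * ρ - μ i.1‖ - lam)⁻¹ := by
            apply Finset.prod_le_prod
            · intro i hi
              have h9 := hβ i hi
              have h10 : 0 < lam := hlam₁
              exact inv_nonneg.mpr (by linarith)
            · intro i hi
              apply inv_anti₀ (hbpos i.1)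
              have h1 := hβb i hi
              linarith
        _ = ((∏ j, (‖1 - (lam : ℂ) * ρ - μ j‖ - lam))⁻¹) ^ l := by
            rw [hsl, Finset.prod_product]
            have h1 : ∀ j : Fin f, (∏ k ∈ Finset.Icc 1 l,
                (‖1 - (lam : ℂ) * ρ - μ j‖ - lam)⁻¹)
                = ((‖1 - (lam : ℂ) * ρ - μ j‖ - lam)⁻¹) ^ l := by
              intro j
              rw [Finset.prod_const, Nat.card_Icc]
              norm_num
            rw [Finset.prod_congr rfl fun j _ => h1 j, Finset.prod_pow, ← Finset.prod_inv_distrib]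
    have hsumshift : (∑ j ∈ Finset.Icc 1 n, ‖a (j - 1)‖) ≤ ∑' m, ‖a m‖ := by
      have himage : (∑ m ∈ (Finset.Icc 1 n).image (· - 1), ‖a m‖)
          = ∑ j ∈ Finset.Icc 1 n, ‖a (j - 1)‖ := by
        apply Finset.sum_image
        intro x hx y hy hxy
        have hx1 := (Finset.mem_Icc.mp hx).1
        have hy1 := (Finset.mem_Icc.mp hy).1
        simp only at hxy
        omega
      rw [← himage]
      exact Summable.sum_le_tsum _ (fun m _ => norm_nonneg _) ha1
    have htsum0 : (0 : ℝ) ≤ ∑' m, ‖a m‖ := tsum_nonneg fun m => norm_nonneg _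
    rw [hRval]
    calc ‖∑ j ∈ Finset.Icc 1 n, c j * (ε * a (j - 1))‖
        ≤ ∑ j ∈ Finset.Icc 1 n, ‖c j * (ε * a (j - 1))‖ := norm_sum_le _ _
      _ ≤ ∑ j ∈ Finset.Icc 1 n, cmax * (‖ε‖ * ‖a (j - 1)‖) := by
          refine Finset.sum_le_sum fun j hj => ?_
          rw [norm_mul, norm_mul]
          apply mul_le_mul_of_nonneg_right _ (by positivity)
          exact hcle j hj
      _ = cmax * ‖ε‖ * ∑ j ∈ Finset.Icc 1 n, ‖a (j - 1)‖ := by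
          rw [Finset.mul_sum]
          refine Finset.sum_congr rfl fun j _ => by ring
      _ ≤ cmax * ‖ε‖ * ∑' m, ‖a m‖ := by
          apply mul_le_mul_of_nonneg_left hsumshift (by positivity)
      _ ≤ cmax * q ^ l := by
          rw [mul_assoc]
          apply mul_le_mul_of_nonneg_left _ hcmax0.le
          have hb1 : ‖ε‖ * (∑' m, ‖a m‖)
              ≤ Real.exp (u / lam) ^ l
                * ((∏ j, (‖1 - (lam : ℂ) * ρ - μ j‖ - lam))⁻¹) ^ l := by
            rw [hεabs]
            exact mul_le_mul_of_nonneg_left (le_trans ha2 hprodle) (by positivity)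
          refine le_trans hb1 ?_
          apply le_of_eq
          rw [hqdef, div_pow, inv_pow]
          exact (div_eq_mul_inv _ _).symm
  -- conclusion
  have hRle : ∀ l : ℕ, ‖R (l + 1)‖ ≤ cmax * q ^ (l + 1) :=
    fun l => hRb (l + 1) (Nat.succ_le_succ (Nat.zero_le l))
  have hsummaj : Summable (fun l : ℕ => cmax * q ^ (l + 1)) := by
    have h1 : Summable (fun l : ℕ => q ^ l) := summable_geometric_of_lt_one hq0.le hq1
    have h2 := h1.mul_left (cmax * q)
    refine h2.congr fun l => ?_
    rw [pow_succ]
    ring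
  have hsum : Summable fun l : ℕ => ‖R (l + 1)‖ :=
    Summable.of_nonneg_of_le (fun _ => norm_nonneg _) hRle hsummaj
  refine ⟨hsum, ?_⟩
  have h1 : ‖∑' l, R (l + 1)‖ ≤ ∑' l, ‖R (l + 1)‖ := by
    have h2 := norm_tsum_le_tsum_norm (f := fun l : ℕ => R (l + 1))
      hsum
    simpa using h2
  have h2 : (∑' l, ‖R (l + 1)‖) ≤ ∑' l : ℕ, cmax * q ^ (l + 1) :=
    Summable.tsum_le_tsum hRle hsum hsummaj
  have h3 : (∑' l : ℕ, cmax * q ^ (l + 1)) = cmax * q * (1 - q)⁻¹ := by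
    have h4 : (fun l : ℕ => cmax * q ^ (l + 1)) = fun l : ℕ => (cmax * q) * q ^ l := by
      funext l
      rw [pow_succ]
      ring
    rw [h4, tsum_mul_left, tsum_geometric_of_lt_one hq0.le hq1]
  have h5 : cmax * q * (1 - q)⁻¹ < cmax := by
    have hq3 : 0 < 1 - q := by linarith
    have h6 : q * (1 - q)⁻¹ < 1 := by
      rw [← div_eq_mul_inv, div_lt_one hq3]
      linarith
    calc cmax * q * (1 - q)⁻¹ = cmax * (q * (1 - q)⁻¹) := by ring
      _ < cmax * 1 := by exact mul_lt_mul_of_pos_left h6 hcmax0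
      _ = cmax := mul_one cmax
  calc ‖∑' l, R (l + 1)‖ ≤ ∑' l, ‖R (l + 1)‖ := h1
    _ ≤ ∑' l : ℕ, cmax * q ^ (l + 1) := h2
    _ = cmax * q * (1 - q)⁻¹ := h3
    _ < cmax := h5
end
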